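/- arXiv:2001.09863 — 4 statements merged into one kernel-verified Lean document; each statement's English description precedes it below -/
import Mathlib

section
/- Sample-path inductive comparison (MAF step): Let Δ_P, Δ_π ∈ ℝ^m be vectors arranged in non-increasing order (Δ_P[1] ≥ … ≥ Δ_P[m], similarly for Δ_π) with Δ_P[i] ≤ Δ_π[i] for all i. Suppose a delivery at time t of a packet generated at time S updates the P-system by removing the maximum component Δ_P[1] and inserting the value t−S, and updates the π-system by removing some arbitrary component and inserting t−S. Then, after re-sorting both resulting vectors in non-increasing order, the new vectors Δ'_P and Δ'_π satisfy Δ'_P[i] ≤ Δ'_π[i] for all i. -/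
lemma sorted_le_of_le (l : List ℝ) (hl : l.Pairwise (· ≥ ·)) {j i : ℕ} (hj : j ≤ i)
    (hi : i < l.length) : l[i] ≤ l[j] := by
  rcases eq_or_lt_of_le hj with rfl | h
  · exact le_rfl
  · exact hl.rel_get_of_lt (a := ⟨j, lt_of_le_of_lt hj hi⟩) (b := ⟨i, hi⟩) h

lemma sorted_count_iff (l : List ℝ) (hl : l.Pairwise (· ≥ ·)) (i : ℕ) (hi : i < l.length) (x : ℝ) :
    l.countP (fun y => x < y) ≤ i ↔ l[i] ≤ x := by
  constructor
  · intro h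
    by_contra hx
    push_neg at hx
    have h1 : ∀ a ∈ l.take (i+1), (fun y => decide (x < y)) a = true := by
      intro a ha
      rw [List.mem_iff_getElem] at ha
      obtain ⟨j, hj, rfl⟩ := ha
      rw [List.length_take] at hj
      have hj' : j ≤ i := Nat.lt_succ_iff.1 (lt_of_lt_of_le hj (min_le_left _ _))
      rw [List.getElem_take]
      simpa using lt_of_lt_of_le hx (sorted_le_of_le l hl hj' hi)
    have h2 := List.countP_eq_length.2 h1
    have h3 : l.countP (fun y => x < y) ≥ (l.take (i+1)).countP (fun y => x < y) :=
      (List.take_sublist _ _).countP_le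
    rw [h2, List.length_take] at h3
    omega
  · intro h
    conv_lhs => rw [← List.take_append_drop i l, List.countP_append]
    have h1 : (l.drop i).countP (fun y => x < y) = 0 := by
      rw [List.countP_eq_zero]
      intro a ha
      rw [List.mem_iff_getElem] at ha
      obtain ⟨j, hj, rfl⟩ := ha
      rw [List.getElem_drop]
      have : l[i + j]'(by rw [List.length_drop] at hj; omega) ≤ l[i] :=
        sorted_le_of_le l hl (Nat.le_add_right _ _) _
      simpa using not_lt.2 (this.trans h)
    have h2 : (l.take i).countP (fun y => x < y) ≤ i :=
      le_trans List.countP_le_length (by simp [List.length_take])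
    omega


/-- The `i`-th largest element of a multiset of reals (0-indexed), via sorting
in non-increasing order. -/
noncomputable def nthLargest (s : Multiset ℝ) (i : ℕ) : ℝ := (s.sort (· ≥ ·)).getD i 0

lemma key (S : Multiset ℝ) (i : ℕ) (hi : i < Multiset.card S) (x : ℝ) :
    S.countP (fun y => x < y) ≤ i ↔ nthLargest S i ≤ x := by
  have hlen : (S.sort (· ≥ ·)).length = Multiset.card S := S.length_sort _
  have hcoe : S.countP (fun y => x < y) = (S.sort (· ≥ ·)).countP (fun y => x < y) := by
    conv_lhs => rw [← S.sort_eq (· ≥ ·)]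
    exact Multiset.coe_countP (p := fun y => x < y) _
  have hnth : nthLargest S i = (S.sort (· ≥ ·))[i]'(by omega) := by
    rw [nthLargest, List.getD_eq_getElem]
  rw [hcoe, hnth]
  exact sorted_count_iff _ (S.pairwise_sort _) i (by omega) x

lemma count_le_of_nth_le (S T : Multiset ℝ) (n : ℕ) (hS : Multiset.card S = n)
    (hT : Multiset.card T = n) (h : ∀ i, i < n → nthLargest S i ≤ nthLargest T i) (x : ℝ) :
    S.countP (fun y => x < y) ≤ T.countP (fun y => x < y) := by
  set i := T.countP (fun y => x < y) with hidef
  rcases lt_or_ge i n with hin | hin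
  · have h1 : nthLargest T i ≤ x := (key T i (by omega) x).1 le_rfl
    exact (key S i (by omega) x).2 ((h i hin).trans h1)
  · calc S.countP (fun y => x < y) ≤ Multiset.card S := Multiset.countP_le_card _ _
      _ ≤ i := by omega

lemma nth_le_of_count_le (S T : Multiset ℝ) (n : ℕ) (hS : Multiset.card S = n)
    (hT : Multiset.card T = n)
    (h : ∀ x : ℝ, S.countP (fun y => x < y) ≤ T.countP (fun y => x < y)) :
    ∀ i, i < n → nthLargest S i ≤ nthLargest T i := by
  intro i hin
  have h1 : T.countP (fun y => nthLargest T i < y) ≤ i :=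
    (key T i (by omega) _).2 le_rfl
  exact (key S i (by omega) _).1 (le_trans (h _) h1)

/-- Inductive comparison step for the MAF scheduler: if the sorted age vector of system `P`
is componentwise below that of system `π`, `P` replaces its maximum component by the new
age `v = t − S ≥ 0` while `π` replaces an arbitrary component by `v`, then after re-sorting
the componentwise domination is preserved. -/
theorem maf_inductive_comparison
    (m : ℕ) (hm : 1 ≤ m) (P Q : Multiset ℝ)
    (hPcard : Multiset.card P = m) (hQcard : Multiset.card Q = m)
    (hle : ∀ i, i < m → nthLargest P i ≤ nthLargest Q i)
    (v : ℝ) (hv : 0 ≤ v)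
    (p : ℝ) (hpP : p ∈ P) (hpmax : ∀ x ∈ P, x ≤ p)
    (q : ℝ) (hqQ : q ∈ Q) :
    ∀ i, i < m → nthLargest (v ::ₘ P.erase p) i ≤ nthLargest (v ::ₘ Q.erase q) i := by
  apply nth_le_of_count_le _ _ m
  · rw [Multiset.card_cons, Multiset.card_erase_of_mem hpP, hPcard]
    exact Nat.succ_pred_eq_of_pos hm
  · rw [Multiset.card_cons, Multiset.card_erase_of_mem hqQ, hQcard]
    exact Nat.succ_pred_eq_of_pos hm
  intro x
  have hcount : ∀ y : ℝ, P.countP (fun z => y < z) ≤ Q.countP (fun z => y < z) :=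
    count_le_of_nth_le P Q m hPcard hQcard hle
  rw [Multiset.countP_cons, Multiset.countP_cons]
  have hPe : P.countP (fun z => x < z)
      = (P.erase p).countP (fun z => x < z) + (if x < p then 1 else 0) := by
    conv_lhs => rw [← Multiset.cons_erase hpP]
    rw [Multiset.countP_cons]
  have hQe : Q.countP (fun z => x < z)
      = (Q.erase q).countP (fun z => x < z) + (if x < q then 1 else 0) := by
    conv_lhs => rw [← Multiset.cons_erase hqQ]
    rw [Multiset.countP_cons]
  have hmain : (P.erase p).countP (fun z => x < z) ≤ (Q.erase q).countP (fun z => x < z) := by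
    by_cases hxq : x < q
    · by_cases hxp : x < p
      · have := hcount x
        rw [hPe, hQe, if_pos hxp, if_pos hxq] at this
        omega
      · have hP0 : P.countP (fun z => x < z) = 0 := by
          rw [Multiset.countP_eq_zero]
          intro z hz
          exact not_lt.2 ((hpmax z hz).trans (not_lt.1 hxp))
        have hle' : (P.erase p).countP (fun z => x < z) ≤ P.countP (fun z => x < z) :=
          Multiset.countP_le_of_le _ (Multiset.erase_le p P)
        omega
    · have := hcount x
      have hle' : (P.erase p).countP (fun z => x < z) ≤ P.countP (fun z => x < z) :=
        Multiset.countP_le_of_le _ (Multiset.erase_le p P)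
      rw [hQe, if_neg hxq] at this
      omega
  omega
end

section
/- Zero-wait Ta-AP value for linear age: For the MAF scheduler with zero-wait sampling and i.i.d. service times Y_i distributed as Y (0 < E[Y] < ∞, E[Y²] < ∞), the long-run total-average age of m sources equals Δ̄₀ = ( (m(m+1)/2)·E[Y]² + (m/2)·E[Y²] ) / E[Y]. -/
open MeasureTheory ProbabilityTheory Filter intervalIntegral

/-- Age vector evolution under the MAF scheduler with zero-wait sampling:
`ageVec a0 Y i` is the (non-increasingly sorted) vector of source ages just after the
`i`-th delivery, where `Y k` is the service time of packet `k`.  After each delivery the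
minimum age is reset to the last service time and all other ages shift and grow. -/
def ageVec {m : ℕ} (a0 : Fin m → ℝ) (Y : ℕ → ℝ) : ℕ → Fin m → ℝ
  | 0 => a0
  | (i + 1) => fun l =>
      if h : (l : ℕ) + 1 < m then ageVec a0 Y i ⟨(l : ℕ) + 1, h⟩ + Y (i + 1)
      else Y (i + 1)


lemma ageVec_nonneg {m : ℕ} (a0 : Fin m → ℝ) (ha0 : ∀ l, 0 ≤ a0 l) (Y : ℕ → ℝ)
    (hY : ∀ i, 0 ≤ Y i) : ∀ i l, 0 ≤ ageVec a0 Y i l := by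
  intro i
  induction i with
  | zero => exact ha0
  | succ i ih =>
    intro l
    by_cases h : (l : ℕ) + 1 < m
    · simp only [ageVec, h, dif_pos]
      exact add_nonneg (ih _) (hY _)
    · simp only [ageVec, h, dif_neg, not_false_iff]
      exact hY _

lemma ageVec_le {m : ℕ} (a0 : Fin m → ℝ) (ha0 : ∀ l, 0 ≤ a0 l) (Y : ℕ → ℝ) (b : ℝ)
    (hY0 : ∀ i, 0 ≤ Y i) (hY : ∀ i, Y i ≤ b) :
    ∀ i l, ageVec a0 Y i l ≤ (∑ l, a0 l) + i * b := by
  have hb : 0 ≤ b := le_trans (hY0 0) (hY 0)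
  have hM : ∀ l, a0 l ≤ ∑ l, a0 l := fun l =>
    Finset.single_le_sum (fun k _ => ha0 k) (Finset.mem_univ l)
  have hM0 : 0 ≤ ∑ l, a0 l := Finset.sum_nonneg fun k _ => ha0 k
  intro i
  induction i with
  | zero => intro l; simpa [ageVec] using hM l
  | succ i ih =>
    intro l
    by_cases h : (l : ℕ) + 1 < m
    · simp only [ageVec, h, dif_pos]
      have := ih ⟨(l : ℕ) + 1, h⟩
      have := hY (i + 1)
      push_cast
      nlinarith
    · simp only [ageVec, h, dif_neg, not_false_iff]
      have := hY (i + 1)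
      push_cast
      nlinarith

lemma ageVec_eq_sum {m : ℕ} (a0 : Fin m → ℝ) (Y : ℕ → ℝ) :
    ∀ i (l : Fin m), m ≤ i + (l : ℕ) →
      ageVec a0 Y i l = ∑ j ∈ Finset.Icc (i + (l : ℕ) + 1 - m) i, Y j := by
  intro i
  induction i with
  | zero => intro l hl; exact absurd hl (by omega)
  | succ i ih =>
    intro l hl
    by_cases h : (l : ℕ) + 1 < m
    · simp only [ageVec, h, dif_pos]
      rw [ih ⟨(l : ℕ) + 1, h⟩ (by simpa using by omega)]
      have h1 : i + ((l : ℕ) + 1) + 1 - m = i + 1 + (l : ℕ) + 1 - m := by omega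
      rw [h1, Finset.sum_Icc_succ_top (by omega)]
    · simp only [ageVec, h, dif_neg, not_false_iff]
      have hl2 : (l : ℕ) + 1 = m := by have := l.isLt; omega
      have h1 : i + 1 + (l : ℕ) + 1 - m = i + 1 := by omega
      rw [h1, Finset.Icc_self, Finset.sum_singleton]

lemma gauss_sum_sub (m : ℕ) :
    ∑ l ∈ Finset.range m, ((m : ℝ) - l) = m * (m + 1) / 2 := by
  induction m with
  | zero => simp
  | succ k ih =>
    rw [Finset.sum_range_succ]
    have h2 : ∑ l ∈ Finset.range k, (((k + 1 : ℕ) : ℝ) - (l : ℝ))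
        = ∑ l ∈ Finset.range k, (((k : ℝ) - l) + 1) := by
      refine Finset.sum_congr rfl fun l _ => by push_cast; ring
    rw [h2, Finset.sum_add_distrib, Finset.sum_const, Finset.card_range, ih]
    push_cast
    ring

/-- Zero-wait Ta-AP value for linear age: for the MAF scheduler with zero-wait sampling and
i.i.d., bounded, non-negative service times `Y_i` with `E[Y] > 0`, the long-run total-average
age of `m` sources, namely the limit of
`E[∑_l ∫_0^{D_n} Δ_l(t) dt] / E[D_n]` with `D_n = ∑_{i=1}^n Y_i`, equals
`((m(m+1)/2) E[Y]² + (m/2) E[Y²]) / E[Y]`. -/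
theorem zero_wait_maf_total_average_age
    {Ω : Type*} [MeasureSpace Ω] [IsProbabilityMeasure (ℙ : Measure Ω)]
    (m : ℕ) (hm : 1 ≤ m)
    (Y : ℕ → Ω → ℝ) (hmeas : ∀ i, Measurable (Y i))
    (hindep : iIndepFun (m := fun _ => Real.measurableSpace) Y ℙ)
    (hident : ∀ i, IdentDistrib (Y i) (Y 0) ℙ ℙ)
    (hnonneg : ∀ i ω, 0 ≤ Y i ω) (b : ℝ) (hbdd : ∀ i ω, Y i ω ≤ b)
    (hEY : 0 < ∫ ω, Y 0 ω)
    (a0 : Fin m → ℝ) (ha0 : ∀ l, 0 ≤ a0 l) :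
    Tendsto
      (fun n : ℕ =>
        (∫ ω, ∑ i ∈ Finset.range n,
            ∑ l, ∫ τ in (ageVec a0 (Y · ω) i l)..(ageVec a0 (Y · ω) i l + Y (i + 1) ω), τ) /
          (∫ ω, ∑ i ∈ Finset.range n, Y (i + 1) ω))
      atTop
      (nhds ((((m : ℝ) * (m + 1) / 2) * (∫ ω, Y 0 ω) ^ 2 +
          ((m : ℝ) / 2) * ∫ ω, (Y 0 ω) ^ 2) / (∫ ω, Y 0 ω))) := by
  set μ := ∫ ω, Y 0 ω with hμdef
  set E2 := ∫ ω, (Y 0 ω) ^ 2 with hE2def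
  set M := ∑ l, a0 l with hMdef
  set C : ℝ := ((m : ℝ) * (m + 1) / 2) * μ ^ 2 + ((m : ℝ) / 2) * E2 with hCdef
  have : Nonempty Ω := MeasureTheory.Measure.nonempty_of_neZero (ℙ : Measure Ω)
  have hb0 : 0 ≤ b := le_trans (hnonneg 0 Classical.ofNonempty) (hbdd 0 _)
  have hM0 : 0 ≤ M := Finset.sum_nonneg fun k _ => ha0 k
  -- integrability of bounded measurable functions
  have intbdd : ∀ (f : Ω → ℝ) (c : ℝ), Measurable f → (∀ ω, |f ω| ≤ c) → Integrable f := by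
    intro f c hf h
    exact (integrable_const c).mono' hf.aestronglyMeasurable
      (Eventually.of_forall (by simpa using h))
  have hYabs : ∀ i ω, |Y i ω| ≤ b := fun i ω =>
    abs_le.2 ⟨by linarith [hnonneg i ω], hbdd i ω⟩
  have intY : ∀ i, Integrable (Y i) := fun i => intbdd _ b (hmeas i) (hYabs i)
  have intYY : ∀ i j, Integrable (fun ω => Y i ω * Y j ω) := by
    intro i j
    refine intbdd _ (b * b) ((hmeas i).mul (hmeas j)) fun ω => ?_
    rw [abs_mul]
    exact mul_le_mul (hYabs i ω) (hYabs j ω) (abs_nonneg _) hb0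
  have intY2 : ∀ i, Integrable (fun ω => (Y i ω) ^ 2) := by
    intro i
    refine intbdd _ (b ^ 2) ((hmeas i).pow_const 2) fun ω => ?_
    rw [abs_of_nonneg (sq_nonneg _)]
    exact pow_le_pow_left₀ (hnonneg i ω) (hbdd i ω) 2
  have measAge : ∀ i (l : Fin m), Measurable (fun ω => ageVec a0 (fun k => Y k ω) i l) := by
    intro i
    induction i with
    | zero => intro l; exact measurable_const
    | succ i ih =>
      intro l
      by_cases h : (l : ℕ) + 1 < m
      · simp only [ageVec, h, dif_pos]
        exact (ih _).add (hmeas _)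
      · simp only [ageVec, h, dif_neg, not_false_iff]
        exact hmeas _
  have hageB : ∀ i (l : Fin m) ω, |ageVec a0 (fun k => Y k ω) i l| ≤ M + i * b := by
    intro i l ω
    rw [abs_of_nonneg (ageVec_nonneg a0 ha0 _ (fun k => hnonneg k ω) i l)]
    exact ageVec_le a0 ha0 _ b (fun k => hnonneg k ω) (fun k => hbdd k ω) i l
  have intAgeY : ∀ i (l : Fin m),
      Integrable (fun ω => ageVec a0 (fun k => Y k ω) i l * Y (i + 1) ω) := by
    intro i l
    refine intbdd _ ((M + i * b) * b) ((measAge i l).mul (hmeas _)) fun ω => ?_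
    rw [abs_mul]
    refine mul_le_mul (hageB i l ω) (hYabs _ ω) (abs_nonneg _) ?_
    positivity
  have hEYi : ∀ i, (∫ ω, Y i ω) = μ := fun i => (hident i).integral_eq
  have hE2i : ∀ i, (∫ ω, (Y i ω) ^ 2) = E2 := by
    intro i
    exact ((hident i).comp (measurable_id.pow_const 2)).integral_eq
  set cseq : ℕ → ℝ := fun i =>
    ∑ l : Fin m, ((∫ ω, ageVec a0 (fun k => Y k ω) i l * Y (i + 1) ω) + E2 / 2) with hcseq
  -- numerator computation
  have hNum : ∀ n : ℕ,
      (∫ ω, ∑ i ∈ Finset.range n,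
          ∑ l, ∫ τ in (ageVec a0 (Y · ω) i l)..(ageVec a0 (Y · ω) i l + Y (i + 1) ω), τ)
        = ∑ i ∈ Finset.range n, cseq i := by
    intro n
    have hpt : ∀ ω, (∑ i ∈ Finset.range n,
          ∑ l, ∫ τ in (ageVec a0 (Y · ω) i l)..(ageVec a0 (Y · ω) i l + Y (i + 1) ω), τ)
        = ∑ i ∈ Finset.range n, ∑ l : Fin m,
            (ageVec a0 (fun k => Y k ω) i l * Y (i + 1) ω + (Y (i + 1) ω) ^ 2 / 2) := by
      intro ω
      refine Finset.sum_congr rfl fun i _ => Finset.sum_congr rfl fun l _ => ?_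
      rw [integral_id]
      ring
    rw [integral_congr_ae (Eventually.of_forall hpt)]
    have hint : ∀ i (l : Fin m), Integrable
        (fun ω => ageVec a0 (fun k => Y k ω) i l * Y (i + 1) ω + (Y (i + 1) ω) ^ 2 / 2) :=
      fun i l => (intAgeY i l).add ((intY2 (i + 1)).div_const 2)
    rw [integral_finset_sum _ fun i _ =>
      integrable_finset_sum _ fun l _ => hint i l]
    refine Finset.sum_congr rfl fun i _ => ?_
    rw [integral_finset_sum _ fun l _ => hint i l]
    refine Finset.sum_congr rfl fun l _ => ?_
    rw [integral_add (intAgeY i l) ((intY2 (i + 1)).div_const 2), MeasureTheory.integral_div, hE2i]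
  -- denominator computation
  have hDen : ∀ n : ℕ, (∫ ω, ∑ i ∈ Finset.range n, Y (i + 1) ω) = n * μ := by
    intro n
    rw [integral_finset_sum _ fun i _ => intY (i + 1)]
    rw [Finset.sum_congr rfl fun i _ => hEYi (i + 1), Finset.sum_const, Finset.card_range,
      nsmul_eq_mul]
  -- for i ≥ m the summand is constant
  have hC : ∀ i, m ≤ i → cseq i = C := by
    intro i hi
    have hAY : ∀ l : Fin m,
        (∫ ω, ageVec a0 (fun k => Y k ω) i l * Y (i + 1) ω) = ((m : ℝ) - l) * μ ^ 2 := by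
      intro l
      have hrw : (fun ω => ageVec a0 (fun k => Y k ω) i l * Y (i + 1) ω)
          = fun ω => ∑ j ∈ Finset.Icc (i + (l : ℕ) + 1 - m) i, Y j ω * Y (i + 1) ω := by
        funext ω
        rw [ageVec_eq_sum a0 _ i l (by omega), Finset.sum_mul]
      rw [hrw, integral_finset_sum _ fun j _ => intYY j (i + 1)]
      have hjj : ∀ j ∈ Finset.Icc (i + (l : ℕ) + 1 - m) i,
          (∫ ω, Y j ω * Y (i + 1) ω) = μ * μ := by
        intro j hj
        have hne : j ≠ i + 1 := by
          simp only [Finset.mem_Icc] at hj; omega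
        have h := IndepFun.integral_mul_eq_mul_integral (hindep.indepFun hne) (intY j).aestronglyMeasurable (intY (i + 1)).aestronglyMeasurable
        rw [show (fun ω => Y j ω * Y (i + 1) ω) = Y j * Y (i + 1) from rfl, h, hEYi, hEYi]
      rw [Finset.sum_congr rfl hjj, Finset.sum_const, Nat.card_Icc]
      have hcard : i + 1 - (i + (l : ℕ) + 1 - m) = m - (l : ℕ) := by
        have := l.isLt; omega
      rw [hcard, nsmul_eq_mul]
      have hcast : ((m - (l : ℕ) : ℕ) : ℝ) = (m : ℝ) - (l : ℕ) := by
        have := l.isLt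
        push_cast [Nat.cast_sub (le_of_lt l.isLt)]
        ring
      rw [hcast]
      ring
    rw [hcseq]
    simp only
    rw [Finset.sum_congr rfl fun l _ => by rw [hAY l]]
    rw [Finset.sum_add_distrib, ← Finset.sum_mul, Finset.sum_const, Finset.card_univ,
      Fintype.card_fin, nsmul_eq_mul]
    rw [Fin.sum_univ_eq_sum_range (fun l => (m : ℝ) - l) m, gauss_sum_sub]
    rw [hCdef]
    ring
  -- final limit
  set K' : ℝ := (∑ i ∈ Finset.range m, cseq i) - m * C with hK'
  have hS : ∀ n, m ≤ n → (∑ i ∈ Finset.range n, cseq i) = K' + n * C := by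
    intro n hn
    rw [Finset.range_eq_Ico, ← Finset.sum_Ico_consecutive _ (Nat.zero_le m) hn,
      ← Finset.range_eq_Ico]
    rw [Finset.sum_congr rfl fun i hi => hC i (Finset.mem_Ico.1 hi).1, Finset.sum_const,
      Nat.card_Ico, nsmul_eq_mul]
    have : ((n - m : ℕ) : ℝ) = (n : ℝ) - m := by
      push_cast [Nat.cast_sub hn]; ring
    rw [this, hK']
    ring
  have hμne : μ ≠ 0 := ne_of_gt hEY
  have key : Tendsto (fun n : ℕ => (∑ i ∈ Finset.range n, cseq i) / ((n : ℝ) * μ)) atTop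
      (nhds (C / μ)) := by
    have h0 : Tendsto (fun n : ℕ => K' * (1 / (n : ℝ)) / μ + C / μ) atTop (nhds (C / μ)) := by
      have h1 := ((tendsto_one_div_atTop_nhds_zero_nat.const_mul K').div_const μ).add_const
        (C / μ)
      simpa using h1
    refine Tendsto.congr' ?_ h0
    filter_upwards [eventually_ge_atTop (max m 1)] with n hn
    have hnm : m ≤ n := le_trans (le_max_left _ _) hn
    have hn1 : 1 ≤ n := le_trans (le_max_right _ _) hn
    have hnne : (n : ℝ) ≠ 0 := by
      have : (0 : ℝ) < n := by exact_mod_cast hn1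
      linarith
    rw [hS n hnm]
    field_simp
  refine Tendsto.congr (fun n => ?_) key
  rw [hNum n, hDen n]
end

section
/- Sufficient condition for zero-wait optimality (linear age): Let Y be a random variable with values in a finite set Y ⊂ [0,∞), E[Y] > 0, and y_inf = min of the support of Y. If y_inf ≥ ((m−1)E[Y]² + E[Y²]) / ((m+1)E[Y]), then every reachable state s = (a_1,…,a_m) of the zero-wait MAF system satisfies ∑_l a_l ≥ Δ̄₀ − m E[Y], where Δ̄₀ = ((m(m+1)/2)E[Y]² + (m/2)E[Y²])/E[Y]. -/
/-- One transition of the sorted age state: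
`a'_{[m]} = y` and `a'_{[l]} = a_{[l+1]} + z + y` for `l < m`, with waiting time `z ≥ 0`
and service time `y` drawn from `supp`. -/
def AgeStep (m : ℕ) (supp : Set ℝ) (a b : Fin m → ℝ) : Prop :=
  ∃ z : ℝ, 0 ≤ z ∧ ∃ y ∈ supp,
    ∀ l : Fin m, b l = if h : (l : ℕ) + 1 < m then a ⟨(l : ℕ) + 1, h⟩ + z + y else y

/-- `n`-step reachability under `AgeStep`. -/
def AgeReach (m : ℕ) (supp : Set ℝ) : ℕ → (Fin m → ℝ) → (Fin m → ℝ) → Prop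
  | 0, a, b => a = b
  | (n + 1), a, b => ∃ c, AgeStep m supp a c ∧ AgeReach m supp n c b

lemma ageReach_lower (m : ℕ) (Yset : Finset ℝ) (hYne : Yset.Nonempty) :
    ∀ (n : ℕ) (a b : Fin m → ℝ), AgeReach m (↑Yset : Set ℝ) n a b →
      ∀ l : Fin m,
        if h : (l : ℕ) + n < m then a ⟨(l : ℕ) + n, h⟩ + n * Yset.min' hYne ≤ b l
        else ((m : ℝ) - (l : ℕ)) * Yset.min' hYne ≤ b l := by
  intro n
  induction n with
  | zero =>
    intro a b hab l
    cases hab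
    simp [l.isLt]
  | succ n ih =>
    rintro a b ⟨c, ⟨z, hz, y, hy, hc⟩, hcb⟩ l
    have hymin : Yset.min' hYne ≤ y := Finset.min'_le _ _ hy
    have hIH := ih c b hcb l
    by_cases h : (l : ℕ) + (n + 1) < m
    · rw [dif_pos h]
      have hn : (l : ℕ) + n < m := by omega
      rw [dif_pos hn] at hIH
      have hcval := hc ⟨(l : ℕ) + n, hn⟩
      rw [dif_pos (show ((l : ℕ) + n) + 1 < m from by omega)] at hcval
      have heq : (⟨(l : ℕ) + n + 1, by omega⟩ : Fin m) = ⟨(l : ℕ) + (n + 1), h⟩ := by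
        simp only [Fin.mk.injEq]; omega
      rw [heq] at hcval
      rw [hcval] at hIH
      push_cast
      linarith
    · rw [dif_neg h]
      by_cases hn : (l : ℕ) + n < m
      · rw [dif_pos hn] at hIH
        have hlast : (l : ℕ) + n + 1 = m := by omega
        have hcval := hc ⟨(l : ℕ) + n, hn⟩
        simp only [Fin.val_mk] at hcval
        rw [dif_neg (by omega)] at hcval
        rw [hcval] at hIH
        have hcast : ((l : ℕ) : ℝ) + n + 1 = m := by exact_mod_cast congrArg (Nat.cast (R := ℝ)) hlast
        have hml : (m : ℝ) - ((l : ℕ) : ℝ) = (n : ℝ) + 1 := by linarith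
        rw [hml]
        linarith
      · rw [dif_neg hn] at hIH
        exact hIH

/-- Sufficient condition for zero-wait optimality (linear age): if the smallest possible
service time satisfies `y_inf ≥ ((m−1)E[Y]² + E[Y²]) / ((m+1)E[Y])`, then every reachable
state `s = (a_1,…,a_m)` of the zero-wait MAF system satisfies
`∑_l a_l ≥ Δ̄₀ − m E[Y]`, where `Δ̄₀ = ((m(m+1)/2)E[Y]² + (m/2)E[Y²]) / E[Y]`. -/
theorem zero_wait_optimality_sufficient_condition
    (m : ℕ) (hm : 1 ≤ m)
    (Yset : Finset ℝ) (hYne : Yset.Nonempty) (hYpos : ∀ y ∈ Yset, 0 ≤ y)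
    (w : ℝ → ℝ) (hw : ∀ y ∈ Yset, 0 ≤ w y) (hw1 : ∑ y ∈ Yset, w y = 1)
    (hEY : 0 < ∑ y ∈ Yset, w y * y)
    (hcond : ((m : ℝ) - 1) * (∑ y ∈ Yset, w y * y) ^ 2 + (∑ y ∈ Yset, w y * y ^ 2) ≤
      ((m : ℝ) + 1) * (∑ y ∈ Yset, w y * y) * Yset.min' hYne)
    (a b : Fin m → ℝ) (n : ℕ) (hn : m ≤ n)
    (hreach : AgeReach m (↑Yset : Set ℝ) n a b) :
    ((((m : ℝ) * (m + 1) / 2) * (∑ y ∈ Yset, w y * y) ^ 2 +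
          ((m : ℝ) / 2) * ∑ y ∈ Yset, w y * y ^ 2) / (∑ y ∈ Yset, w y * y)) -
        (m : ℝ) * (∑ y ∈ Yset, w y * y) ≤ ∑ l, b l := by
  set E := ∑ y ∈ Yset, w y * y with hE
  set E2 := ∑ y ∈ Yset, w y * y ^ 2 with hE2
  set yinf := Yset.min' hYne with hyinf
  have hE2nn : 0 ≤ E2 := Finset.sum_nonneg fun y hy =>
    mul_nonneg (hw y hy) (sq_nonneg y)
  -- lower bound on each component
  have hlow : ∀ l : Fin m, ((m : ℝ) - (l : ℕ)) * yinf ≤ b l := by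
    intro l
    have := ageReach_lower m Yset hYne n a b hreach l
    rw [dif_neg (by omega)] at this
    exact this
  have hSsum : ∑ l : Fin m, ((m : ℝ) - (l : ℕ)) * yinf ≤ ∑ l, b l :=
    Finset.sum_le_sum fun l _ => hlow l
  have hgauss : ∑ l : Fin m, ((m : ℝ) - (l : ℕ)) = (m : ℝ) * (m + 1) / 2 := by
    rw [Fin.sum_univ_eq_sum_range (fun i => ((m : ℝ) - (i : ℕ))),
      Finset.sum_sub_distrib, Finset.sum_const, Finset.card_range]
    have h2 : (∑ i ∈ Finset.range m, (i : ℕ)) * 2 = m * (m - 1) :=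
      Finset.sum_range_id_mul_two m
    have h2' : ((∑ i ∈ Finset.range m, (i : ℕ) : ℕ) : ℝ) * 2 = (m : ℝ) * ((m : ℝ) - 1) := by
      have := congrArg (Nat.cast (R := ℝ)) h2
      push_cast [Nat.cast_sub hm] at this ⊢
      linarith [this]
    have hcast : ((∑ i ∈ Finset.range m, (i : ℕ) : ℕ) : ℝ) =
        ∑ i ∈ Finset.range m, ((i : ℕ) : ℝ) := by push_cast; ring
    rw [← hcast, nsmul_eq_mul]
    linarith [h2']
  rw [← Finset.sum_mul, hgauss] at hSsum
  have hkey : (m : ℝ) * (m + 1) / 2 * yinf + (m : ℝ) * E ≥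
      ((m : ℝ) * (m + 1) / 2 * E ^ 2 + (m : ℝ) / 2 * E2) / E := by
    rw [ge_iff_le, div_le_iff₀ hEY]
    have hmpos : (0 : ℝ) ≤ (m : ℝ) / 2 := by positivity
    nlinarith [mul_le_mul_of_nonneg_left hcond hmpos, hEY, sq_nonneg E]
  linarith
end

section
/- State reachability bound: Under the state evolution a'_{[m]} = y, a'_{[l]} = a_{[l+1]} + z + y for l = 1,…,m−1 with y ≥ y_inf > 0 and z ≥ 0, after at least m transitions from any initial state, the sorted state satisfies a_{[l]} ≥ (m−l+1)·y_inf for every l = 1,…,m. -/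
/-- A reachability chain of length `n+1` can be split with the step at the end. -/
lemma ageReach_succ_iff (m : ℕ) (supp : Set ℝ) (n : ℕ) (a b : Fin m → ℝ)
    (h : AgeReach m supp (n + 1) a b) :
    ∃ c, AgeReach m supp n a c ∧ AgeStep m supp c b := by
  induction n generalizing a with
  | zero =>
    obtain ⟨c, hstep, hreach⟩ := h
    exact ⟨a, rfl, by rwa [show c = b from hreach] at hstep⟩
  | succ n ih =>
    obtain ⟨c, hstep, hreach⟩ := h
    obtain ⟨d, hd1, hd2⟩ := ih c hreach
    exact ⟨d, ⟨c, hstep, hd1⟩, hd2⟩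

/-- The key invariant: after `k` steps, indices `l` with `m - l ≤ k` are bounded. -/
def AgeInv (m : ℕ) (yinf : ℝ) (k : ℕ) (b : Fin m → ℝ) : Prop :=
  ∀ l : Fin m, m - (l : ℕ) ≤ k → ((m - (l : ℕ) : ℕ) : ℝ) * yinf ≤ b l

lemma ageStep_inv (m : ℕ) (yinf : ℝ) (hyinf : 0 < yinf) (k : ℕ) (a b : Fin m → ℝ)
    (ha : AgeInv m yinf k a) (hstep : AgeStep m (Set.Ici yinf) a b) :
    AgeInv m yinf (k + 1) b := by
  obtain ⟨z, hz, y, hy, hb⟩ := hstep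
  intro l hl
  rw [hb l]
  by_cases h : (l : ℕ) + 1 < m
  · rw [dif_pos h]
    have h1 : m - ((l : ℕ) + 1) ≤ k := by omega
    have h2 := ha ⟨(l : ℕ) + 1, h⟩ h1
    have hcast : ((m - (l : ℕ) : ℕ) : ℝ) = ((m - ((l : ℕ) + 1) : ℕ) : ℝ) + 1 := by
      have : m - (l : ℕ) = (m - ((l : ℕ) + 1)) + 1 := by omega
      rw [this]; push_cast; ring
    rw [hcast, add_mul, one_mul]
    have : yinf ≤ z + y := by
      have : yinf ≤ y := hy
      linarith
    linarith
  · rw [dif_neg h]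
    have hml : m - (l : ℕ) = 1 := by
      have := l.isLt; omega
    rw [hml]
    simpa using hy

lemma ageReach_inv (m : ℕ) (yinf : ℝ) (hyinf : 0 < yinf) (n : ℕ) (a b : Fin m → ℝ)
    (hreach : AgeReach m (Set.Ici yinf) n a b) :
    AgeInv m yinf n b := by
  induction n generalizing b with
  | zero =>
    intro l hl
    exact absurd hl (by have := l.isLt; omega)
  | succ n ih =>
    obtain ⟨c, h1, h2⟩ := ageReach_succ_iff m _ n a b hreach
    exact ageStep_inv m yinf hyinf n c b (ih c h1) h2

/-- State reachability bound: with service times `y ≥ y_inf > 0` and waits `z ≥ 0`, after at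
least `m` transitions from any initial state, the sorted state satisfies
`a_{[l]} ≥ (m − l + 1) · y_inf` for every `l` (here the index `l : Fin m` is 0-based, so the
`l`-th largest entry is bounded below by `(m − l) · y_inf`). -/
theorem age_state_reachability_bound
    (m : ℕ) (hm : 1 ≤ m) (yinf : ℝ) (hyinf : 0 < yinf)
    (a b : Fin m → ℝ) (n : ℕ) (hn : m ≤ n)
    (hreach : AgeReach m (Set.Ici yinf) n a b) :
    ∀ l : Fin m, ((m - (l : ℕ) : ℕ) : ℝ) * yinf ≤ b l := by
  intro l
  exact ageReach_inv m yinf hyinf n a b hreach l (by omega)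
end
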